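/- Let a ∈ (0,1), k, m, N positive integers, p ∈ (0,2]. For f_a(z)=(a−z)/(1−az), ω_m(z) := −r^m (constant), ω_k(z)=z^k, and |z|=r ∈ (0,1), one has |f_a(ω_m(z))|^p + ∑_{n=N}^∞ |a_n| |ω_k(z)|^n = ((a+r^m)/(1+a r^m))^p + (1−a²) a^{N−1} r^{kN}/(1 − a r^k), and as a → 1⁻ the condition that this exceed 1 becomes 2r^{kN}(1+r^m) − p(1−r^m)(1−r^k) > 0. -/

import Mathlib

open Filter

/-- Sharpness computation for the Bohr–Rogosinski radius: for the test function
`f_a(z) = (a-z)/(1-az)` (with `|a₀| = a`, `|aₙ| = (1-a²)a^{n-1}`), `ω_m(z) = -r^m`,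
`ω_k(z) = z^k` and `|z| = r`, the Bohr–Rogosinski sum equals
`((a+r^m)/(1+a r^m))^p + (1-a²) a^{N-1} r^{kN}/(1-a r^k)`, and the quantity `Q(a,r)`
controlling its exceeding `1` tends, as `a → 1⁻`, to
`(1+r^m)^{p-1} (2 r^{kN}(1+r^m) - p(1-r^m)(1-r^k))`. -/
theorem stmt_13 (k m N : ℕ) (hk : 1 ≤ k) (hm : 1 ≤ m) (hN : 1 ≤ N)
    (p : ℝ) (hp : p ∈ Set.Ioc (0 : ℝ) 2) (r : ℝ) (hr : r ∈ Set.Ioo (0 : ℝ) 1) :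
    (∀ a : ℝ, a ∈ Set.Ioo (0 : ℝ) 1 →
      ((a + r ^ m) / (1 + a * r ^ m)) ^ p +
          (∑' n : ℕ, (1 - a ^ 2) * a ^ (n + N - 1) * r ^ (k * (n + N))) =
        ((a + r ^ m) / (1 + a * r ^ m)) ^ p +
          (1 - a ^ 2) * a ^ (N - 1) * r ^ (k * N) / (1 - a * r ^ k)) ∧
    Tendsto
      (fun a : ℝ =>
        (1 - a * r ^ k) * (1 + a * r ^ m) ^ p *
          (((1 + a) / (1 - a * r ^ k)) * a ^ (N - 1) * r ^ (k * N) -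
            (1 / (1 - a)) * (1 - ((r ^ m + a) / (1 + a * r ^ m)) ^ p)))
      (nhdsWithin 1 (Set.Iio 1))
      (nhds ((1 + r ^ m) ^ (p - 1) *
        (2 * r ^ (k * N) * (1 + r ^ m) - p * (1 - r ^ m) * (1 - r ^ k)))) := by
  obtain ⟨hr0, hr1⟩ := hr
  set x := r ^ m with hxdef
  set y := r ^ k with hydef
  have hx0 : 0 < x := pow_pos hr0 m
  have hx1 : x < 1 := pow_lt_one₀ hr0.le hr1 (by omega)
  have hy0 : 0 < y := pow_pos hr0 k
  have hy1 : y < 1 := pow_lt_one₀ hr0.le hr1 (by omega)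
  constructor
  · intro a ⟨ha0, ha1⟩
    congr 1
    have hfun : ∀ n : ℕ, (1 - a ^ 2) * a ^ (n + N - 1) * r ^ (k * (n + N)) =
        ((1 - a ^ 2) * a ^ (N - 1) * r ^ (k * N)) * (a * y) ^ n := by
      intro n
      have h1 : n + N - 1 = (N - 1) + n := by omega
      have h2 : k * (n + N) = k * N + k * n := by ring
      rw [h1, h2, pow_add, pow_add, pow_mul, mul_pow, ← hydef]
      ring
    rw [tsum_congr hfun, tsum_mul_left, tsum_geometric_of_lt_one
      (by positivity) (by nlinarith), div_eq_mul_inv]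
  · -- limit part
    have hden : (1 : ℝ) + x ≠ 0 := by positivity
    -- derivative of g a = ((x+a)/(1+a*x))^p at a = 1
    have h1 : HasDerivAt (fun a : ℝ => x + a) 1 1 := (hasDerivAt_id 1).const_add x
    have h2 : HasDerivAt (fun a : ℝ => 1 + a * x) x 1 := by
      simpa using ((hasDerivAt_id 1).mul_const x).const_add 1
    have hdiv : HasDerivAt (fun a : ℝ => (x + a) / (1 + a * x))
        ((1 * (1 + 1 * x) - (x + 1) * x) / (1 + 1 * x) ^ 2) 1 := by
      simpa [Pi.div_def] using h1.div h2 (by simpa using hden)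
    have hval : (1 * (1 + 1 * x) - (x + 1) * x) / (1 + 1 * x) ^ 2 = (1 - x) / (1 + x) := by
      field_simp
      ring
    rw [hval] at hdiv
    have hg1 : (x + 1) / (1 + 1 * x) = 1 := by
      rw [one_mul, add_comm x 1, div_self hden]
    have hderiv : HasDerivAt (fun a : ℝ => ((x + a) / (1 + a * x)) ^ p)
        ((1 - x) / (1 + x) * p) 1 := by
      have h := hdiv.rpow_const (p := p) (Or.inl (by rw [hg1]; norm_num))
      simp only [hg1, Real.one_rpow, mul_one] at h
      exact h
    have hslope : Tendsto (fun a : ℝ => (1 / (1 - a)) * (1 - ((x + a) / (1 + a * x)) ^ p))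
        (nhdsWithin 1 (Set.Iio 1)) (nhds ((1 - x) / (1 + x) * p)) := by
      have hs := hasDerivAt_iff_tendsto_slope.mp hderiv
      have hmono : nhdsWithin (1 : ℝ) (Set.Iio 1) ≤ nhdsWithin 1 {(1 : ℝ)}ᶜ :=
        nhdsWithin_mono 1 (fun z hz => ne_of_lt hz)
      have hs' := hs.mono_left hmono
      refine hs'.congr' ?_
      filter_upwards [self_mem_nhdsWithin] with a ha
      have h1p : ((x + 1) / (1 + 1 * x)) ^ p = 1 := by rw [hg1, Real.one_rpow]
      have hne : (1 : ℝ) - a ≠ 0 := sub_ne_zero.mpr (ne_of_gt ha)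
      have hne' : a - 1 ≠ 0 := sub_ne_zero.mpr (ne_of_lt ha)
      simp only [slope_def_field]
      rw [h1p]
      generalize ((x + a) / (1 + a * x) : ℝ) ^ p = G
      field_simp
      ring
    -- continuous factors
    have hA : Tendsto (fun a : ℝ => (1 - a * y) * (1 + a * x) ^ p)
        (nhdsWithin 1 (Set.Iio 1)) (nhds ((1 - y) * (1 + x) ^ p)) := by
      apply Tendsto.mono_left _ nhdsWithin_le_nhds
      have : ContinuousAt (fun a : ℝ => (1 - a * y) * (1 + a * x) ^ p) 1 := by
        apply ContinuousAt.mul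
        · fun_prop
        · exact (show ContinuousAt (fun a : ℝ => 1 + a * x) 1 by fun_prop).rpow_const
            (Or.inr hp.1.le)
      simpa using this.tendsto
    have hB : Tendsto (fun a : ℝ => ((1 + a) / (1 - a * y)) * a ^ (N - 1) * r ^ (k * N))
        (nhdsWithin 1 (Set.Iio 1)) (nhds ((2 / (1 - y)) * 1 * r ^ (k * N))) := by
      apply Tendsto.mono_left _ nhdsWithin_le_nhds
      have : ContinuousAt (fun a : ℝ => ((1 + a) / (1 - a * y)) * a ^ (N - 1) * r ^ (k * N)) 1 := by
        apply ContinuousAt.mul _ continuousAt_const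
        apply ContinuousAt.mul
        · exact ContinuousAt.div (by fun_prop) (by fun_prop) (by nlinarith)
        · fun_prop
      simpa [one_add_one_eq_two] using this.tendsto
    have hcomb := hA.mul (hB.sub hslope)
    have heq : ((1 - y) * (1 + x) ^ p) * ((2 / (1 - y)) * 1 * r ^ (k * N) -
        (1 - x) / (1 + x) * p) =
        (1 + x) ^ (p - 1) * (2 * r ^ (k * N) * (1 + x) - p * (1 - x) * (1 - y)) := by
      rw [Real.rpow_sub_one hden]
      have hy' : (1 : ℝ) - y ≠ 0 := by nlinarith
      field_simp
    rw [heq] at hcomb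
    exact hcomb
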